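/- arXiv:1210.0827 — 5 statements merged into one kernel-verified Lean document; each statement's English description precedes it below -/
import Mathlib

section
/- Let U, V be abelian groups and ∘ : U × V → W a full bimap. Then the adjoint ring of the tensor-product bimap ⊗_{Adj(∘)} : U × V → (U ⊗_ℤ V)/K(Adj(∘)) equals Adj(∘); that is, Adj(⊗_{Adj(∘)}) = Adj(∘). -/
open scoped TensorProduct

namespace TensorBimap

variable {U V W X Y : Type*} [AddCommGroup U] [AddCommGroup V] [AddCommGroup W]
  [AddCommGroup X] [AddCommGroup Y]

/-- A bimap is *full* if its values generate the codomain. -/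
def IsFull (b : U →+ V →+ W) : Prop :=
  AddSubgroup.closure {w : W | ∃ u v, b u v = w} = ⊤

/-- The adjoint set of a bimap. -/
def Adj (b : U →+ V →+ W) : Set (AddMonoid.End U × AddMonoid.End V) :=
  {p | ∀ u v, b (p.1 u) v = b u (p.2 v)}

/-- Composition of a bimap with an additive map on the codomain. -/
def comp₂ (τ : W →+ X) (b : U →+ V →+ W) : U →+ V →+ X where
  toFun u := τ.comp (b u)
  map_zero' := by ext v; simp
  map_add' u u' := by ext v; simp

/-- The canonical bimap into the tensor product over ℤ. -/
noncomputable def tmulHom : U →+ V →+ U ⊗[ℤ] V where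
  toFun u := (TensorProduct.mk ℤ U V u).toAddMonoidHom
  map_zero' := by ext v; simp
  map_add' u u' := by ext v; simp [TensorProduct.add_tmul]

/-- The unique additive map `U ⊗ V →+ W` through which a bimap factors. -/
noncomputable def hat (b : U →+ V →+ W) : U ⊗[ℤ] V →+ W :=
  (TensorProduct.lift (LinearMap.mk₂ ℤ (fun u v => b u v)
      (fun u u' v => by simp)
      (fun c u v => by simp)
      (fun u v v' => by simp)
      (fun c u v => by simp))).toAddMonoidHom

/-- The subgroup `K(S)` of the tensor product. -/
noncomputable def K (S : Set (AddMonoid.End U × AddMonoid.End V)) : AddSubgroup (U ⊗[ℤ] V) :=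
  AddSubgroup.closure {t | ∃ p ∈ S, ∃ u v, t = (p.1 u) ⊗ₜ[ℤ] v - u ⊗ₜ[ℤ] (p.2 v)}

/-- The tensor-product bimap `⊗_S : U × V → (U ⊗ V)/K(S)`. -/
noncomputable def tmulBimap (S : Set (AddMonoid.End U × AddMonoid.End V)) :
    U →+ V →+ (U ⊗[ℤ] V) ⧸ K S :=
  comp₂ (QuotientAddGroup.mk' (K S)) tmulHom

/-- `d` factors through `b`. -/
def FactorsThrough (b : U →+ V →+ X) (d : U →+ V →+ Y) : Prop :=
  ∃ τ : X →+ Y, ∀ u v, d u v = τ (b u v)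


/-- `Adj(⊗_{Adj(∘)}) = Adj(∘)` for a full bimap `∘`. -/
theorem statement1 {U V W : Type*} [AddCommGroup U] [AddCommGroup V] [AddCommGroup W]
    (b : U →+ V →+ W) (hfull : IsFull b) :
    Adj (tmulBimap (Adj b)) = Adj b := by
  have hhat : ∀ (u : U) (v : V), hat b (u ⊗ₜ[ℤ] v) = b u v := by
    intro u v; simp [hat]
  have hker : ∀ t ∈ K (Adj b), hat b t = 0 := by
    intro t ht
    refine AddSubgroup.closure_induction ?_ ?_ ?_ ?_ ht
    · rintro s ⟨p, hp, u, v, rfl⟩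
      simp only [map_sub, hhat]
      rw [hp u v, sub_self]
    · simp
    · intro a c _ _ ha hc; simp [ha, hc]
    · intro a _ ha; simp [ha]
  ext p
  obtain ⟨x, y⟩ := p
  simp only [Adj, Set.mem_setOf_eq]
  constructor
  · intro h u v
    have h1 := h u v
    simp only [tmulBimap, comp₂, tmulHom, AddMonoidHom.coe_mk, ZeroHom.coe_mk,
      AddMonoidHom.coe_comp, Function.comp_apply, LinearMap.toAddMonoidHom_coe,
      TensorProduct.mk_apply, QuotientAddGroup.mk'_apply] at h1
    have hmem : (x u) ⊗ₜ[ℤ] v - u ⊗ₜ[ℤ] (y v) ∈ K (Adj b) :=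
      (QuotientAddGroup.eq_iff_sub_mem).mp h1
    have := hker _ hmem
    rw [map_sub, hhat, hhat, sub_eq_zero] at this
    exact this
  · intro h u v
    simp only [tmulBimap, comp₂, tmulHom, AddMonoidHom.coe_mk, ZeroHom.coe_mk,
      AddMonoidHom.coe_comp, Function.comp_apply, LinearMap.toAddMonoidHom_coe,
      TensorProduct.mk_apply, QuotientAddGroup.mk'_apply]
    refine (QuotientAddGroup.eq_iff_sub_mem).mpr ?_
    exact AddSubgroup.subset_closure ⟨(x, y), h, u, v, rfl⟩

end TensorBimap
end

section
/- Let U, V be abelian groups and S any subset of End(U) × End(V)^op. Then K(Adj(⊗_S)) = K(S); equivalently, the tensor-product bimap ⊗_{Adj(⊗_S)} is factor equivalent to ⊗_S. -/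
open scoped TensorProduct

namespace TensorBimap

variable {U V W X Y : Type*} [AddCommGroup U] [AddCommGroup V] [AddCommGroup W]
  [AddCommGroup X] [AddCommGroup Y]

/-- `K(Adj(⊗_S)) = K(S)`; equivalently `⊗_{Adj(⊗_S)}` is factor
equivalent to `⊗_S`. -/
theorem statement2 {U V : Type*} [AddCommGroup U] [AddCommGroup V]
    (S : Set (AddMonoid.End U × AddMonoid.End V)) :
    K (Adj (tmulBimap S)) = K S := by
  apply le_antisymm
  · rw [K, AddSubgroup.closure_le]
    rintro t ⟨p, hp, u, v, rfl⟩
    have h := hp u v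
    simp only [tmulBimap, comp₂, tmulHom, AddMonoidHom.coe_mk, ZeroHom.coe_mk,
      AddMonoidHom.coe_comp, Function.comp_apply, LinearMap.toAddMonoidHom_coe,
      TensorProduct.mk_apply, QuotientAddGroup.mk'_apply] at h
    rwa [QuotientAddGroup.eq_iff_sub_mem] at h
  · unfold K
    rw [AddSubgroup.closure_le]
    rintro t ⟨p, hp, u, v, rfl⟩
    refine AddSubgroup.subset_closure ⟨p, ?_, u, v, rfl⟩
    intro u' v'
    show (QuotientAddGroup.mk' (K S)) ((p.1 u') ⊗ₜ[ℤ] v')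
        = (QuotientAddGroup.mk' (K S)) (u' ⊗ₜ[ℤ] (p.2 v'))
    rw [QuotientAddGroup.mk'_apply, QuotientAddGroup.mk'_apply,
      QuotientAddGroup.eq_iff_sub_mem]
    exact AddSubgroup.subset_closure ⟨p, hp, u', v', rfl⟩

end TensorBimap
end

section
/- Let V be an abelian group, S ⊆ End(V) × End(V), and let ∧_S : V × V → (V ⊗_ℤ V)/L(S) be the exterior tensor-product bimap. If φ ∈ Aut(V) and conjugation by φ maps Adj(∧_S) onto Adj(∧_S) (i.e. {(φxφ⁻¹, φyφ⁻¹) : (x, y) ∈ Adj(∧_S)} = Adj(∧_S)), then the assignment (u ⊗ v) + L(S) ↦ (φu ⊗ φv) + L(S) is well defined and extends to an automorphism ĥ of (V ⊗_ℤ V)/L(S), and (φ; ĥ) is a pseudo-isometry of ∧_S. -/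
open scoped TensorProduct

namespace TensorBimap

variable {U V W X Y : Type*} [AddCommGroup U] [AddCommGroup V] [AddCommGroup W]
  [AddCommGroup X] [AddCommGroup Y]

/-- Conjugation `φ x φ⁻¹` of an endomorphism by an automorphism, maps written on
the left: `u ↦ φ (x (φ⁻¹ u))`. -/
def conjE {U : Type*} [AddCommGroup U] (f : U ≃+ U) (x : AddMonoid.End U) :
    AddMonoid.End U :=
  f.toAddMonoidHom.comp ((x : U →+ U).comp f.symm.toAddMonoidHom)

/-- The subgroup `L(S)` of `V ⊗ V` generated by the squares `v ⊗ v` together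
with the elements `xu ⊗ v − u ⊗ yv` for `(x, y) ∈ S`. -/
noncomputable def L {V : Type*} [AddCommGroup V]
    (S : Set (AddMonoid.End V × AddMonoid.End V)) : AddSubgroup (V ⊗[ℤ] V) :=
  AddSubgroup.closure
    ({t | ∃ v : V, t = v ⊗ₜ[ℤ] v} ∪
     {t | ∃ p ∈ S, ∃ u v : V, t = (p.1 u) ⊗ₜ[ℤ] v - u ⊗ₜ[ℤ] (p.2 v)})

/-- The exterior tensor-product bimap `∧_S : V × V → (V ⊗ V)/L(S)`. -/
noncomputable def wedgeBimap {V : Type*} [AddCommGroup V]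
    (S : Set (AddMonoid.End V × AddMonoid.End V)) :
    V →+ V →+ (V ⊗[ℤ] V) ⧸ L S :=
  comp₂ (QuotientAddGroup.mk' (L S)) tmulHom

/-- if `φ ∈ Aut(V)` and conjugation by `φ` maps `Adj(∧_S)` onto
itself, then `(u ⊗ v) + L(S) ↦ (φu ⊗ φv) + L(S)` is well defined and extends to
an automorphism `ĥ` of `(V ⊗ V)/L(S)`, and `(φ; ĥ)` is a pseudo-isometry of
`∧_S`. -/
theorem statement11 {V : Type*} [AddCommGroup V]
    (S : Set (AddMonoid.End V × AddMonoid.End V)) (φ : V ≃+ V)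
    (hN : (fun p : AddMonoid.End V × AddMonoid.End V =>
            (conjE φ p.1, conjE φ p.2)) '' Adj (wedgeBimap S) = Adj (wedgeBimap S)) :
    ∃ h : ((V ⊗[ℤ] V) ⧸ L S) ≃+ ((V ⊗[ℤ] V) ⧸ L S),
      ∀ u v, wedgeBimap S (φ u) (φ v) = h (wedgeBimap S u v) := by
  classical
  set A := Adj (wedgeBimap S) with hA
  -- basic computation of the bimap
  have hw : ∀ u v : V, wedgeBimap S u v = QuotientAddGroup.mk' (L S) (u ⊗ₜ[ℤ] v) :=
    fun u v => rfl
  -- membership of generators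
  have hsq : ∀ v : V, v ⊗ₜ[ℤ] v ∈ L S := fun v =>
    AddSubgroup.subset_closure (Or.inl ⟨v, rfl⟩)
  have hSgen : ∀ p ∈ S, ∀ u v : V, (p.1 u) ⊗ₜ[ℤ] v - u ⊗ₜ[ℤ] (p.2 v) ∈ L S :=
    fun p hp u v => AddSubgroup.subset_closure (Or.inr ⟨p, hp, u, v, rfl⟩)
  -- Adj pairs give elements of L S
  have hAgen : ∀ p ∈ A, ∀ u v : V, (p.1 u) ⊗ₜ[ℤ] v - u ⊗ₜ[ℤ] (p.2 v) ∈ L S := by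
    intro p hp u v
    have := hp u v
    rw [hw, hw] at this
    have h2 : ((p.1 u) ⊗ₜ[ℤ] v : V ⊗[ℤ] V) - u ⊗ₜ[ℤ] (p.2 v) ∈ L S := by
      have h3 := (QuotientAddGroup.eq (s := L S)).mp this
      have := (L S).neg_mem h3
      simpa [neg_add_rev, sub_eq_add_neg, add_comm] using this
    exact h2
  -- the automorphism of the tensor square
  let e : (V ⊗[ℤ] V) ≃+ (V ⊗[ℤ] V) :=
    (TensorProduct.congr φ.toIntLinearEquiv φ.toIntLinearEquiv).toAddEquiv
  have he : ∀ u v : V, e (u ⊗ₜ[ℤ] v) = (φ u) ⊗ₜ[ℤ] (φ v) := by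
    intro u v
    show (TensorProduct.congr φ.toIntLinearEquiv φ.toIntLinearEquiv) (u ⊗ₜ[ℤ] v) = _
    rw [TensorProduct.congr_tmul]; rfl
  have hesymm : ∀ u v : V, e.symm (u ⊗ₜ[ℤ] v) = (φ.symm u) ⊗ₜ[ℤ] (φ.symm v) := by
    intro u v
    apply e.injective
    rw [AddEquiv.apply_symm_apply, he]
    simp
  -- conjugation facts
  have hconj : ∀ x : AddMonoid.End V, ∀ u : V, (conjE φ x) (φ u) = φ (x u) := by
    intro x u
    show φ (x (φ.symm (φ u))) = φ (x u)
    rw [AddEquiv.symm_apply_apply]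
  have hconjsymm : ∀ x : AddMonoid.End V, ∀ u : V,
      (conjE φ.symm x) (φ.symm u) = φ.symm (x u) := by
    intro x u
    show φ.symm (x (φ (φ.symm u))) = φ.symm (x u)
    rw [AddEquiv.apply_symm_apply]
  -- the forward image condition
  have hfwd : ∀ p ∈ A, (conjE φ p.1, conjE φ p.2) ∈ A := by
    intro p hp
    have : (conjE φ p.1, conjE φ p.2) ∈
        (fun p : AddMonoid.End V × AddMonoid.End V =>
          (conjE φ p.1, conjE φ p.2)) '' A := ⟨p, hp, rfl⟩
    rw [hN] at this; exact this
  have hbwd : ∀ p ∈ A, (conjE φ.symm p.1, conjE φ.symm p.2) ∈ A := by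
    intro p hp
    rw [← hN] at hp
    obtain ⟨q, hq, hqe⟩ := hp
    have h1 : conjE φ.symm p.1 = q.1 := by
      refine AddMonoidHom.ext fun u => ?_
      have hp1 : p.1 = conjE φ q.1 := by rw [← hqe]
      rw [hp1]; simp [conjE, AddMonoidHom.comp_apply]; exact congrArg (fun x => q.1 x) (φ.symm_apply_apply u)
    have h2 : conjE φ.symm p.2 = q.2 := by
      refine AddMonoidHom.ext fun u => ?_
      have hp2 : p.2 = conjE φ q.2 := by rw [← hqe]
      rw [hp2]; simp [conjE, AddMonoidHom.comp_apply]; exact congrArg (fun x => q.2 x) (φ.symm_apply_apply u)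
    rw [h1, h2]; exact hq
  -- e maps L S into L S (via the Adj characterisation)
  have hmap_le : ∀ (f : (V ⊗[ℤ] V) ≃+ (V ⊗[ℤ] V)),
      (∀ u v : V, ∃ u' v' : V, f (u ⊗ₜ[ℤ] v) = u' ⊗ₜ[ℤ] v') →
      True := fun _ _ => trivial
  have key : ∀ (ψ : V ≃+ V) (f : (V ⊗[ℤ] V) ≃+ (V ⊗[ℤ] V)),
      (∀ u v : V, f (u ⊗ₜ[ℤ] v) = (ψ u) ⊗ₜ[ℤ] (ψ v)) →
      (∀ p ∈ A, (conjE ψ p.1, conjE ψ p.2) ∈ A) →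
      AddSubgroup.map f.toAddMonoidHom (L S) ≤ L S := by
    intro ψ f hf hconjA
    rw [L, AddMonoidHom.map_closure]
    apply (AddSubgroup.closure_le _).mpr
    rintro t ⟨s, hs, rfl⟩
    rcases hs with ⟨v, rfl⟩ | ⟨p, hp, u, v, rfl⟩
    · rw [show f.toAddMonoidHom (v ⊗ₜ[ℤ] v) = f (v ⊗ₜ[ℤ] v) from rfl, hf]
      exact hsq (ψ v)
    · have hpA : p ∈ A := by
        intro u' v'
        rw [hw, hw]
        exact (QuotientAddGroup.eq (s := L S)).mpr (by
          have := hSgen p hp u' v'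
          have := (L S).neg_mem this
          simpa [neg_add_rev, sub_eq_add_neg, add_comm] using this)
      have hq := hconjA p hpA
      have hfv : f.toAddMonoidHom ((p.1 u) ⊗ₜ[ℤ] v - u ⊗ₜ[ℤ] (p.2 v)) =
          (ψ (p.1 u)) ⊗ₜ[ℤ] (ψ v) - (ψ u) ⊗ₜ[ℤ] (ψ (p.2 v)) := by
        rw [map_sub]
        rw [show f.toAddMonoidHom ((p.1 u) ⊗ₜ[ℤ] v) = f ((p.1 u) ⊗ₜ[ℤ] v) from rfl,
          show f.toAddMonoidHom (u ⊗ₜ[ℤ] (p.2 v)) = f (u ⊗ₜ[ℤ] (p.2 v)) from rfl, hf, hf]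
      rw [hfv]
      have hx : ψ (p.1 u) = (conjE ψ p.1) (ψ u) := by
        show _ = ψ (p.1 (ψ.symm (ψ u)))
        rw [AddEquiv.symm_apply_apply]
      have hy : ψ (p.2 v) = (conjE ψ p.2) (ψ v) := by
        show _ = ψ (p.2 (ψ.symm (ψ v)))
        rw [AddEquiv.symm_apply_apply]
      rw [hx, hy]
      exact hAgen _ hq (ψ u) (ψ v)
  have hle₁ : AddSubgroup.map e.toAddMonoidHom (L S) ≤ L S := key φ e he hfwd
  have hle₂ : AddSubgroup.map e.symm.toAddMonoidHom (L S) ≤ L S := key φ.symm e.symm hesymm hbwd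
  have hmap : AddSubgroup.map (e : V ⊗[ℤ] V →+ V ⊗[ℤ] V) (L S) = L S := by
    apply le_antisymm hle₁
    intro t ht
    refine ⟨e.symm t, hle₂ ⟨t, ht, rfl⟩, by simp⟩
  refine ⟨QuotientAddGroup.congr (L S) (L S) e hmap, ?_⟩
  intro u v
  rw [hw, hw]
  have : (QuotientAddGroup.congr (L S) (L S) e hmap)
      (QuotientAddGroup.mk' (L S) (u ⊗ₜ[ℤ] v)) =
      QuotientAddGroup.mk' (L S) (e (u ⊗ₜ[ℤ] v)) := rfl
  rw [this, he]

end TensorBimap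
end

section
/- Let k be a field, a, b positive integers, and W a k-subspace of M_{a×b}(k). Then the set A of all pairs ( [[α·1_a, Z],[0, β·1_b]], [[α·1_a, 0],[Zᵗ, β·1_b]] ) with α, β ∈ k and Z ∈ W is a unital k-subalgebra of M_{a+b}(k) × M_{a+b}(k)^op, its Jacobson radical is J(A) = { ( [[0, Z],[0, 0]], [[0, 0],[Zᵗ, 0]] ) : Z ∈ W }, and A/J(A) ≅ k × k. -/
set_option maxHeartbeats 1000000

open MulOpposite Matrix

namespace BlockAlg

variable {k : Type*} [Field k] {a b : ℕ}

/-- The set `A` of pairs `([[α1, Z],[0, β1]], [[α1, 0],[Zᵗ, β1]])` with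
`α, β ∈ k` and `Z ∈ W`, inside `M_{a+b}(k) × M_{a+b}(k)ᵒᵖ`. -/
def Aset (W : Submodule k (Matrix (Fin a) (Fin b) k)) :
    Set (Matrix (Fin a ⊕ Fin b) (Fin a ⊕ Fin b) k ×
      (Matrix (Fin a ⊕ Fin b) (Fin a ⊕ Fin b) k)ᵐᵒᵖ) :=
  {p | ∃ α β : k, ∃ Z ∈ W,
    p.1 = Matrix.fromBlocks (α • 1) Z 0 (β • 1) ∧
    p.2 = op (Matrix.fromBlocks (α • 1) 0 Zᵀ (β • 1))}

/-- The set `{([[0, Z],[0, 0]], [[0, 0],[Zᵗ, 0]]) : Z ∈ W}`. -/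
def Jset (W : Submodule k (Matrix (Fin a) (Fin b) k)) :
    Set (Matrix (Fin a ⊕ Fin b) (Fin a ⊕ Fin b) k ×
      (Matrix (Fin a ⊕ Fin b) (Fin a ⊕ Fin b) k)ᵐᵒᵖ) :=
  {p | ∃ Z ∈ W,
    p.1 = Matrix.fromBlocks 0 Z 0 0 ∧
    p.2 = op (Matrix.fromBlocks 0 0 Zᵀ 0)}

/-- Multiplication of upper block-triangular matrices of the relevant shape. -/
lemma mulUpper (α β α' β' : k) (Z Z' : Matrix (Fin a) (Fin b) k) :
    Matrix.fromBlocks (α • 1) Z 0 (β • 1) * Matrix.fromBlocks (α' • 1) Z' 0 (β' • 1)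
      = Matrix.fromBlocks ((α * α') • (1 : Matrix (Fin a) (Fin a) k))
          (α • Z' + β' • Z) 0 ((β * β') • (1 : Matrix (Fin b) (Fin b) k)) := by
  rw [Matrix.fromBlocks_multiply]
  simp [Matrix.smul_mul, Matrix.mul_smul, smul_smul, mul_comm]

/-- Multiplication of lower block-triangular matrices of the relevant shape. -/
lemma mulLower (α β α' β' : k) (Y Y' : Matrix (Fin b) (Fin a) k) :
    Matrix.fromBlocks (α • 1) 0 Y (β • 1) * Matrix.fromBlocks (α' • 1) 0 Y' (β' • 1)
      = Matrix.fromBlocks ((α * α') • (1 : Matrix (Fin a) (Fin a) k)) 0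
          (α' • Y + β • Y') ((β * β') • (1 : Matrix (Fin b) (Fin b) k)) := by
  rw [Matrix.fromBlocks_multiply]
  simp [Matrix.smul_mul, Matrix.mul_smul, smul_smul, mul_comm]

/-- The subalgebra with carrier `Aset W`. -/
def Bsub (W : Submodule k (Matrix (Fin a) (Fin b) k)) :
    Subalgebra k (Matrix (Fin a ⊕ Fin b) (Fin a ⊕ Fin b) k ×
      (Matrix (Fin a ⊕ Fin b) (Fin a ⊕ Fin b) k)ᵐᵒᵖ) where
  carrier := Aset W
  mul_mem' := by
    rintro p q ⟨α, β, Z, hZ, h1, h2⟩ ⟨α', β', Z', hZ', h1', h2'⟩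
    refine ⟨α * α', β * β', α • Z' + β' • Z,
      W.add_mem (W.smul_mem _ hZ') (W.smul_mem _ hZ), ?_, ?_⟩
    · show p.1 * q.1 = _
      rw [h1, h1', mulUpper]
    · show p.2 * q.2 = _
      rw [h2, h2', ← op_mul, mulLower]
      simp [Matrix.transpose_add, Matrix.transpose_smul, mul_comm]
  add_mem' := by
    rintro p q ⟨α, β, Z, hZ, h1, h2⟩ ⟨α', β', Z', hZ', h1', h2'⟩
    refine ⟨α + α', β + β', Z + Z', W.add_mem hZ hZ', ?_, ?_⟩
    · show p.1 + q.1 = _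
      rw [h1, h1', Matrix.fromBlocks_add]
      simp [add_smul]
    · show p.2 + q.2 = _
      rw [h2, h2', ← op_add, Matrix.fromBlocks_add]
      simp [add_smul, Matrix.transpose_add]
  algebraMap_mem' := by
    intro c
    refine ⟨c, c, 0, W.zero_mem, ?_, ?_⟩
    · show algebraMap k _ c = _
      rw [Algebra.algebraMap_eq_smul_one, ← Matrix.fromBlocks_one, Matrix.fromBlocks_smul]
      simp
    · show algebraMap k _ c = _
      rw [MulOpposite.algebraMap_apply, Algebra.algebraMap_eq_smul_one,
        ← Matrix.fromBlocks_one, Matrix.fromBlocks_smul]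
      simp

/-- The underlying function of the projection to `k × k`. -/
def piFun (ha : 0 < a) (hb : 0 < b) {W : Submodule k (Matrix (Fin a) (Fin b) k)}
    (x : Bsub W) : k × k :=
  (x.val.1 (Sum.inl ⟨0, ha⟩) (Sum.inl ⟨0, ha⟩),
   x.val.1 (Sum.inr ⟨0, hb⟩) (Sum.inr ⟨0, hb⟩))

lemma piFun_eval (ha : 0 < a) (hb : 0 < b) {W : Submodule k (Matrix (Fin a) (Fin b) k)}
    (x : Bsub W) (α β : k) (Z : Matrix (Fin a) (Fin b) k)
    (h : x.val.1 = Matrix.fromBlocks (α • 1) Z 0 (β • 1)) :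
    piFun ha hb x = (α, β) := by
  unfold piFun
  rw [h]
  simp [Matrix.one_apply_eq]

/-- The projection ring homomorphism to `k × k`. -/
def piHom (ha : 0 < a) (hb : 0 < b) (W : Submodule k (Matrix (Fin a) (Fin b) k)) :
    Bsub W →+* k × k where
  toFun := piFun ha hb
  map_one' := by
    have h : (1 : Bsub W).val.1
        = Matrix.fromBlocks ((1 : k) • 1) 0 0 ((1 : k) • 1) := by
      rw [one_smul, one_smul, Matrix.fromBlocks_one]
      rfl
    show piFun ha hb 1 = 1
    rw [piFun_eval ha hb _ 1 1 0 h]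
    rfl
  map_mul' := by
    intro x y
    obtain ⟨α, β, Z, hZ, h1, _⟩ := x.2
    obtain ⟨α', β', Z', hZ', h1', _⟩ := y.2
    have hxy : (x * y : Bsub W).val.1
        = Matrix.fromBlocks ((α * α') • 1) (α • Z' + β' • Z) 0 ((β * β') • 1) := by
      show x.val.1 * y.val.1 = _
      rw [h1, h1', mulUpper]
    show piFun ha hb (x * y) = piFun ha hb x * piFun ha hb y
    rw [piFun_eval ha hb _ _ _ _ hxy, piFun_eval ha hb _ _ _ _ h1,
      piFun_eval ha hb _ _ _ _ h1']
    rfl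
  map_zero' := by
    have h : (0 : Bsub W).val.1
        = Matrix.fromBlocks ((0 : k) • 1) 0 0 ((0 : k) • 1) := by
      rw [ZeroMemClass.coe_zero]
      simp only [Prod.fst_zero, zero_smul, Matrix.fromBlocks_zero]
    show piFun ha hb 0 = 0
    rw [piFun_eval ha hb _ 0 0 0 h]
    rfl
  map_add' := by
    intro x y
    obtain ⟨α, β, Z, hZ, h1, _⟩ := x.2
    obtain ⟨α', β', Z', hZ', h1', _⟩ := y.2
    have hxy : (x + y : Bsub W).val.1
        = Matrix.fromBlocks ((α + α') • 1) (Z + Z') 0 ((β + β') • 1) := by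
      show x.val.1 + y.val.1 = _
      rw [h1, h1', Matrix.fromBlocks_add]
      simp [add_smul]
    show piFun ha hb (x + y) = piFun ha hb x + piFun ha hb y
    rw [piFun_eval ha hb _ _ _ _ hxy, piFun_eval ha hb _ _ _ _ h1,
      piFun_eval ha hb _ _ _ _ h1']
    rfl

lemma piHom_eval (ha : 0 < a) (hb : 0 < b) {W : Submodule k (Matrix (Fin a) (Fin b) k)}
    (x : Bsub W) (α β : k) (Z : Matrix (Fin a) (Fin b) k)
    (h : x.val.1 = Matrix.fromBlocks (α • 1) Z 0 (β • 1)) :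
    piHom ha hb W x = (α, β) :=
  piFun_eval ha hb x α β Z h

lemma sq_zero (ha : 0 < a) (hb : 0 < b) (W : Submodule k (Matrix (Fin a) (Fin b) k))
    (x : Bsub W) (hx : piHom ha hb W x = 0) : x * x = 0 := by
  obtain ⟨α, β, Z, hZ, h1, h2⟩ := x.2
  have he := piHom_eval ha hb x α β Z h1
  rw [hx] at he
  have hα : α = 0 := by simpa using congrArg Prod.fst he.symm
  have hβ : β = 0 := by simpa using congrArg Prod.snd he.symm
  subst hα; subst hβ
  apply Subtype.ext
  apply Prod.ext
  · show x.val.1 * x.val.1 = 0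
    rw [h1, mulUpper]
    simp
  · show x.val.2 * x.val.2 = 0
    rw [h2, ← op_mul, mulLower]
    simp

lemma piHom_surj (ha : 0 < a) (hb : 0 < b) (W : Submodule k (Matrix (Fin a) (Fin b) k)) :
    Function.Surjective (piHom ha hb W) := by
  rintro ⟨α, β⟩
  refine ⟨⟨(Matrix.fromBlocks (α • 1) 0 0 (β • 1),
      op (Matrix.fromBlocks (α • 1) 0 0 (β • 1))),
      ⟨α, β, 0, W.zero_mem, rfl, by simp⟩⟩, ?_⟩
  exact piHom_eval ha hb _ α β 0 rfl

lemma ker_eq_jacobson (ha : 0 < a) (hb : 0 < b) (W : Submodule k (Matrix (Fin a) (Fin b) k)) :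
    RingHom.ker (piHom ha hb W) = Ideal.jacobson (⊥ : Ideal (Bsub W)) := by
  ext x
  rw [RingHom.mem_ker, Ideal.mem_jacobson_iff]
  constructor
  · intro hx y
    have ht : piHom ha hb W (y * x) = 0 := by
      rw [_root_.map_mul, hx, mul_zero]
    have h2 : (y * x) * (y * x) = 0 := sq_zero ha hb W _ ht
    refine ⟨1 - y * x, ?_⟩
    rw [Ideal.mem_bot]
    have h3 : (1 - y * x) * y * x = y * x - (y * x) * (y * x) := by
      rw [mul_assoc, sub_mul, one_mul]
    rw [h3, h2, sub_zero]
    rw [add_comm]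
    rw [sub_add_cancel, sub_self]
  · intro h
    set xx := piHom ha hb W x with hxx
    have key : ∀ γ δ : k, γ * xx.1 + 1 ≠ 0 ∧ δ * xx.2 + 1 ≠ 0 := by
      intro γ δ
      obtain ⟨y, hy⟩ := piHom_surj ha hb W (γ, δ)
      obtain ⟨z, hz⟩ := h y
      rw [Ideal.mem_bot, sub_eq_zero] at hz
      have h0 := congrArg (piHom ha hb W) hz
      rw [RingHom.map_add, RingHom.map_mul, RingHom.map_mul, RingHom.map_one, hy] at h0
      set c := piHom ha hb W z
      have e1 : c.1 * γ * xx.1 + c.1 = 1 := by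
        have := congrArg Prod.fst h0
        simpa using this
      have e2 : c.2 * δ * xx.2 + c.2 = 1 := by
        have := congrArg Prod.snd h0
        simpa using this
      constructor
      · intro hc
        have h3 : c.1 * (γ * xx.1 + 1) = 1 := by
          rw [mul_add, mul_one, ← mul_assoc]; exact e1
        rw [hc, mul_zero] at h3
        exact zero_ne_one h3
      · intro hc
        have h3 : c.2 * (δ * xx.2 + 1) = 1 := by
          rw [mul_add, mul_one, ← mul_assoc]; exact e2
        rw [hc, mul_zero] at h3
        exact zero_ne_one h3
    have hα0 : xx.1 = 0 := by
      by_contra hc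
      exact (key (-xx.1⁻¹) 0).1 (by field_simp; norm_num)
    have hβ0 : xx.2 = 0 := by
      by_contra hc
      exact (key 0 (-xx.2⁻¹)).2 (by field_simp; norm_num)
    exact Prod.ext hα0 hβ0

/-- the set `A` of pairs
`([[α1, Z],[0, β1]], [[α1, 0],[Zᵗ, β1]])` (`α, β ∈ k`, `Z ∈ W`) is a unital
`k`-subalgebra of `M_{a+b}(k) × M_{a+b}(k)ᵒᵖ`, its Jacobson radical is
`{([[0, Z],[0, 0]], [[0, 0],[Zᵗ, 0]]) : Z ∈ W}`, and `A/J(A) ≅ k × k`. -/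
theorem statement17 {k : Type*} [Field k] {a b : ℕ} (ha : 0 < a) (hb : 0 < b)
    (W : Submodule k (Matrix (Fin a) (Fin b) k)) :
    ∃ B : Subalgebra k (Matrix (Fin a ⊕ Fin b) (Fin a ⊕ Fin b) k ×
        (Matrix (Fin a ⊕ Fin b) (Fin a ⊕ Fin b) k)ᵐᵒᵖ),
      (B : Set _) = Aset W ∧
      Subtype.val '' ((Ideal.jacobson (⊥ : Ideal B)) : Set B) = Jset W ∧
      ∃ π : B →+* k × k, Function.Surjective π ∧
        RingHom.ker π = Ideal.jacobson (⊥ : Ideal B) := by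
  refine ⟨Bsub W, rfl, ?_, piHom ha hb W, piHom_surj ha hb W, ker_eq_jacobson ha hb W⟩
  rw [← ker_eq_jacobson ha hb W]
  ext p
  constructor
  · rintro ⟨x, hx, rfl⟩
    rw [SetLike.mem_coe, RingHom.mem_ker] at hx
    obtain ⟨α, β, Z, hZ, h1, h2⟩ := x.2
    have he := piHom_eval ha hb x α β Z h1
    rw [hx] at he
    have hα : α = 0 := by simpa using congrArg Prod.fst he.symm
    have hβ : β = 0 := by simpa using congrArg Prod.snd he.symm
    subst hα; subst hβ
    refine ⟨Z, hZ, ?_, ?_⟩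
    · rw [h1]; simp
    · rw [h2]; simp
  · rintro ⟨Z, hZ, h1, h2⟩
    have hmem : p ∈ Aset W := by
      refine ⟨0, 0, Z, hZ, ?_, ?_⟩
      · rw [h1]; simp
      · rw [h2]; simp
    refine ⟨⟨p, hmem⟩, ?_, rfl⟩
    rw [SetLike.mem_coe, RingHom.mem_ker]
    have h3 : (⟨p, hmem⟩ : Bsub W).val.1
        = Matrix.fromBlocks ((0 : k) • 1) Z 0 ((0 : k) • 1) := by
      rw [h1]; simp
    rw [piHom_eval ha hb _ 0 0 Z h3]
    rfl

end BlockAlg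
end

section
/- Let k be a field, a, b positive integers, W a k-subspace of M_{a×b}(k), and let A ⊆ M_{a+b}(k) × M_{a+b}(k)^op be the set of all pairs ( [[α·1_a, Z],[0, β·1_b]], [[α·1_a, 0],[Zᵗ, β·1_b]] ) with α, β ∈ k, Z ∈ W. For F ∈ GL_a(k) and G ∈ GL_b(k), set P = diag(F, G⁻ᵗ) and Q = diag(F⁻ᵗ, G) in GL_{a+b}(k), where G⁻ᵗ denotes inverse transpose. Then (P⁻¹xP, Q⁻¹yQ) ∈ A for all (x, y) ∈ A if and only if F·W·Gᵗ = W as subspaces of M_{a×b}(k). -/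
open MulOpposite Matrix

namespace BlockAlg

variable {k : Type*} [Field k] {a b : ℕ}

/-- The linear equivalence `Z ↦ F Z Gᵀ`. -/
def conjLE (F : (Matrix (Fin a) (Fin a) k)ˣ) (G : (Matrix (Fin b) (Fin b) k)ˣ) :
    Matrix (Fin a) (Fin b) k ≃ₗ[k] Matrix (Fin a) (Fin b) k where
  toFun Z := (F : Matrix (Fin a) (Fin a) k) * Z * (G : Matrix (Fin b) (Fin b) k)ᵀ
  invFun Z := (↑F⁻¹ : Matrix (Fin a) (Fin a) k) * Z * ((↑G⁻¹ : Matrix (Fin b) (Fin b) k))ᵀ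
  map_add' X Y := by simp [Matrix.add_mul, Matrix.mul_add]
  map_smul' c X := by simp [Matrix.mul_smul, Matrix.smul_mul]
  left_inv Z := by
    have hF := F.inv_mul
    have hG : (↑G : Matrix (Fin b) (Fin b) k)ᵀ * (↑G⁻¹ : Matrix (Fin b) (Fin b) k)ᵀ = 1 := by
      rw [← Matrix.transpose_mul, G.inv_mul, Matrix.transpose_one]
    calc (↑F⁻¹ : Matrix (Fin a) (Fin a) k) * ((↑F : Matrix (Fin a) (Fin a) k) * Z *
            (↑G : Matrix (Fin b) (Fin b) k)ᵀ) * (↑G⁻¹ : Matrix (Fin b) (Fin b) k)ᵀ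
        = ((↑F⁻¹ : Matrix (Fin a) (Fin a) k) * (↑F : Matrix (Fin a) (Fin a) k)) * Z *
          ((↑G : Matrix (Fin b) (Fin b) k)ᵀ * (↑G⁻¹ : Matrix (Fin b) (Fin b) k)ᵀ) := by
          simp only [Matrix.mul_assoc]
      _ = Z := by rw [hF, hG, Matrix.one_mul, Matrix.mul_one]
  right_inv Z := by
    have hF := F.mul_inv
    have hG : (↑G⁻¹ : Matrix (Fin b) (Fin b) k)ᵀ * (↑G : Matrix (Fin b) (Fin b) k)ᵀ = 1 := by
      rw [← Matrix.transpose_mul, G.mul_inv, Matrix.transpose_one]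
    calc (↑F : Matrix (Fin a) (Fin a) k) * ((↑F⁻¹ : Matrix (Fin a) (Fin a) k) * Z *
            (↑G⁻¹ : Matrix (Fin b) (Fin b) k)ᵀ) * (↑G : Matrix (Fin b) (Fin b) k)ᵀ
        = ((↑F : Matrix (Fin a) (Fin a) k) * (↑F⁻¹ : Matrix (Fin a) (Fin a) k)) * Z *
          ((↑G⁻¹ : Matrix (Fin b) (Fin b) k)ᵀ * (↑G : Matrix (Fin b) (Fin b) k)ᵀ) := by
          simp only [Matrix.mul_assoc]
      _ = Z := by rw [hF, hG, Matrix.one_mul, Matrix.mul_one]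

lemma blockInv {A A' : Matrix (Fin a) (Fin a) k} {B B' : Matrix (Fin b) (Fin b) k}
    (hA : A' * A = 1) (hB : B' * B = 1) :
    (Matrix.fromBlocks A 0 0 B)⁻¹ = Matrix.fromBlocks A' 0 0 B' := by
  apply Matrix.inv_eq_left_inv
  rw [Matrix.fromBlocks_multiply]
  simp [hA, hB, Matrix.fromBlocks_one]

/-- with `P = diag(F, G⁻ᵗ)` and `Q = diag(F⁻ᵗ, G)`, conjugation
`(x, y) ↦ (P⁻¹xP, Q⁻¹yQ)` maps `A` into itself if and only if `F·W·Gᵗ = W`. -/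
theorem statement18 {k : Type*} [Field k] {a b : ℕ} (ha : 0 < a) (hb : 0 < b)
    (W : Submodule k (Matrix (Fin a) (Fin b) k))
    (F : (Matrix (Fin a) (Fin a) k)ˣ) (G : (Matrix (Fin b) (Fin b) k)ˣ) :
    (∀ p ∈ Aset W,
        ((Matrix.fromBlocks (↑F) 0 0 ((↑G⁻¹)ᵀ))⁻¹ * p.1 *
            Matrix.fromBlocks (↑F) 0 0 ((↑G⁻¹)ᵀ),
          op ((Matrix.fromBlocks ((↑F⁻¹)ᵀ) 0 0 (↑G))⁻¹ * p.2.unop *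
            Matrix.fromBlocks ((↑F⁻¹)ᵀ) 0 0 (↑G))) ∈ Aset W) ↔
      {Y : Matrix (Fin a) (Fin b) k | ∃ Z ∈ W,
        Y = (F : Matrix (Fin a) (Fin a) k) * Z * (G : Matrix (Fin b) (Fin b) k)ᵀ} = ↑W := by
  have hPinv : (Matrix.fromBlocks (↑F) 0 0 ((↑G⁻¹)ᵀ) :
      Matrix (Fin a ⊕ Fin b) (Fin a ⊕ Fin b) k)⁻¹ =
      Matrix.fromBlocks (↑F⁻¹) 0 0 ((↑G)ᵀ) := by
    apply blockInv F.inv_mul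
    rw [← Matrix.transpose_mul, G.inv_mul, Matrix.transpose_one]
  have hQinv : (Matrix.fromBlocks ((↑F⁻¹)ᵀ) 0 0 (↑G) :
      Matrix (Fin a ⊕ Fin b) (Fin a ⊕ Fin b) k)⁻¹ =
      Matrix.fromBlocks ((↑F)ᵀ) 0 0 (↑G⁻¹) := by
    apply blockInv ?_ G.inv_mul
    rw [← Matrix.transpose_mul, F.inv_mul, Matrix.transpose_one]
  have key1 : ∀ (α β : k) (Z : Matrix (Fin a) (Fin b) k),
      (Matrix.fromBlocks (↑F) 0 0 ((↑G⁻¹)ᵀ) : Matrix (Fin a ⊕ Fin b) (Fin a ⊕ Fin b) k)⁻¹ *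
        (Matrix.fromBlocks (α • 1) Z 0 (β • 1)) *
        Matrix.fromBlocks (↑F) 0 0 ((↑G⁻¹)ᵀ) =
      Matrix.fromBlocks (α • 1) ((↑F⁻¹ : Matrix (Fin a) (Fin a) k) * Z * ((↑G⁻¹ : Matrix (Fin b) (Fin b) k))ᵀ) 0 (β • 1) := by
    intro α β Z
    rw [hPinv, Matrix.fromBlocks_multiply, Matrix.fromBlocks_multiply, Matrix.fromBlocks_inj]
    refine ⟨?_, ?_, ?_, ?_⟩ <;>
      simp [Matrix.mul_smul, Matrix.smul_mul, Matrix.mul_assoc, Matrix.transpose_mul,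
        ← Matrix.coe_units_inv, ← Matrix.transpose_mul, ← Units.val_mul]
  have key2 : ∀ (α β : k) (Z : Matrix (Fin a) (Fin b) k),
      (Matrix.fromBlocks ((↑F⁻¹)ᵀ) 0 0 (↑G) : Matrix (Fin a ⊕ Fin b) (Fin a ⊕ Fin b) k)⁻¹ *
        (Matrix.fromBlocks (α • 1) 0 Zᵀ (β • 1)) *
        Matrix.fromBlocks ((↑F⁻¹)ᵀ) 0 0 (↑G) =
      Matrix.fromBlocks (α • 1) 0 ((↑F⁻¹ : Matrix (Fin a) (Fin a) k) * Z * ((↑G⁻¹ : Matrix (Fin b) (Fin b) k))ᵀ)ᵀ (β • 1) := by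
    intro α β Z
    rw [hQinv, Matrix.fromBlocks_multiply, Matrix.fromBlocks_multiply, Matrix.fromBlocks_inj]
    refine ⟨?_, ?_, ?_, ?_⟩
    · simp [Matrix.mul_smul, Matrix.smul_mul, Matrix.mul_assoc,
        ← Matrix.coe_units_inv, ← Matrix.transpose_mul, ← Units.val_mul]
    · simp
    · simp [Matrix.transpose_mul, Matrix.mul_smul, Matrix.smul_mul, Matrix.mul_assoc]
    · simp [Matrix.mul_smul, Matrix.smul_mul, ← Matrix.coe_units_inv, ← Units.val_mul]
  have hmapset : {Y : Matrix (Fin a) (Fin b) k | ∃ Z ∈ W,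
        Y = (F : Matrix (Fin a) (Fin a) k) * Z * (G : Matrix (Fin b) (Fin b) k)ᵀ} =
      ↑(W.map (conjLE F G : Matrix (Fin a) (Fin b) k →ₗ[k] Matrix (Fin a) (Fin b) k)) := by
    ext Y
    simp only [Set.mem_setOf_eq, Submodule.map_coe, Set.mem_image, SetLike.mem_coe]
    constructor
    · rintro ⟨Z, hZ, rfl⟩; exact ⟨Z, hZ, rfl⟩
    · rintro ⟨Z, hZ, rfl⟩; exact ⟨Z, hZ, rfl⟩
  constructor
  · intro h
    rw [hmapset]
    norm_cast
    have hle : W ≤ W.map (conjLE F G : Matrix (Fin a) (Fin b) k →ₗ[k] Matrix (Fin a) (Fin b) k) := by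
      intro Z hZ
      obtain ⟨α', β', Z', hZ', h1, h2⟩ := h (Matrix.fromBlocks ((0:k) • 1) Z 0 ((0:k) • 1),
        op (Matrix.fromBlocks ((0:k) • 1) 0 Zᵀ ((0:k) • 1))) ⟨0, 0, Z, hZ, rfl, rfl⟩
      rw [key1] at h1
      obtain ⟨-, hB, -, -⟩ := Matrix.fromBlocks_inj.mp h1
      refine ⟨Z', hZ', ?_⟩
      show (conjLE F G) Z' = Z
      have := (conjLE F G).apply_symm_apply Z
      rw [← hB]
      exact this
    exact (Submodule.eq_of_le_of_finrank_le hle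
      (le_of_eq (LinearEquiv.finrank_map_eq _ _))).symm
  · intro h
    rintro ⟨x, y⟩ ⟨α, β, Z, hZ, hx, hy⟩
    have hZ' : (↑F⁻¹ : Matrix (Fin a) (Fin a) k) * Z * (↑G⁻¹ : Matrix (Fin b) (Fin b) k)ᵀ ∈ W := by
      have hZmem : Z ∈ {Y : Matrix (Fin a) (Fin b) k | ∃ Z ∈ W,
          Y = (F : Matrix (Fin a) (Fin a) k) * Z * (G : Matrix (Fin b) (Fin b) k)ᵀ} := by
        rw [h]; exact hZ
      obtain ⟨Z₀, hZ₀, rfl⟩ := hZmem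
      have heq : (conjLE F G).symm (conjLE F G Z₀) = Z₀ := (conjLE F G).symm_apply_apply Z₀
      have : (↑F⁻¹ : Matrix (Fin a) (Fin a) k) *
          ((F : Matrix (Fin a) (Fin a) k) * Z₀ * (G : Matrix (Fin b) (Fin b) k)ᵀ) *
          (↑G⁻¹ : Matrix (Fin b) (Fin b) k)ᵀ = Z₀ := heq
      rw [this]; exact hZ₀
    simp only at hx hy
    exact ⟨α, β, _, hZ', by rw [show x = _ from hx, key1], by rw [show y = _ from hy]; rw [unop_op, key2]⟩


end BlockAlg
end
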